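/- For any initial equilibrium (r(1),𝒞(1)) and target equilibrium (r*,𝒞*), there exists a transformation path from (r(1),𝒞(1)) to (r*,𝒞*) whose total cost equals the minimum over all transformation paths between these two profiles and whose length (number of steps) is at most 2m − 1, where m is the number of row-player strategies. -/

import Mathlib

open Finset

/-- Reward needed to incentivize the row player to play `i'` when the columns play `𝒞`. -/
noncomputable def Trow {m n k : ℕ} [NeZero m] (R : Fin m → Fin n → ℝ)
    (𝒞 : Fin k → Fin n) (i' : Fin m) : ℝ :=
  (univ.sup' univ_nonempty fun i => ∑ j, R i (𝒞 j)) - ∑ j, R i' (𝒞 j)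

/-- Reward needed to incentivize the column players to play `𝒞'` when the row plays `i`. -/
noncomputable def Tcol {m n k : ℕ} [NeZero n] (C : Fin m → Fin n → ℝ)
    (i : Fin m) (𝒞' : Fin k → Fin n) : ℝ :=
  k * (univ.sup' univ_nonempty fun q => C i q) - ∑ j, C i (𝒞' j)

/-- `(i, 𝒞)` is an equilibrium if `T_𝒞(i) = 0` and `T_i(𝒞) = 0`. -/
def IsEquilibrium {m n k : ℕ} [NeZero m] [NeZero n] (R C : Fin m → Fin n → ℝ)
    (i : Fin m) (𝒞 : Fin k → Fin n) : Prop :=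
  Trow R 𝒞 i = 0 ∧ Tcol C i 𝒞 = 0

/-- Total cost of the transformation path `P 0, P 1, …, P L`. -/
noncomputable def pathCost {m n k : ℕ} [NeZero m] [NeZero n] (R C : Fin m → Fin n → ℝ)
    (P : ℕ → Fin m × (Fin k → Fin n)) (L : ℕ) : ℝ :=
  ∑ t ∈ Finset.range L, (Tcol C (P t).1 (P (t+1)).2 + Trow R (P t).2 (P (t+1)).1)

/-- The set of total costs of transformation paths from profile `a` to profile `b`. -/
noncomputable def transCosts {m n k : ℕ} [NeZero m] [NeZero n] (R C : Fin m → Fin n → ℝ)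
    (a b : Fin m × (Fin k → Fin n)) : Set ℝ :=
  {x | ∃ (L : ℕ) (P : ℕ → Fin m × (Fin k → Fin n)),
    P 0 = a ∧ P L = b ∧ x = pathCost R C P L}

set_option linter.unusedSectionVars false

section Aux
variable {m n : ℕ} (k : ℕ) [NeZero m] [NeZero n] (R C : Fin m → Fin n → ℝ)

lemma Trow_nonneg (𝒞 : Fin k → Fin n) (i' : Fin m) : 0 ≤ Trow R 𝒞 i' := by
  have h := Finset.le_sup' (fun i => ∑ j, R i (𝒞 j)) (mem_univ i')
  simp only [Trow, sub_nonneg]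
  exact h

lemma Tcol_nonneg (i : Fin m) (𝒞' : Fin k → Fin n) : 0 ≤ Tcol C i 𝒞' := by
  have h : ∑ j, C i (𝒞' j) ≤ ∑ _j : Fin k, (univ.sup' univ_nonempty fun q => C i q) :=
    Finset.sum_le_sum fun j _ => Finset.le_sup' _ (mem_univ (𝒞' j))
  simp only [Finset.sum_const, card_univ, Fintype.card_fin, nsmul_eq_mul] at h
  simp only [Tcol, sub_nonneg]
  exact h

/-- minimal one-step cost for moving row from `i` to `i'`. -/
noncomputable def hEdge (i i' : Fin m) : ℝ :=
  Finset.inf' (univ : Finset (Fin k → Fin n)) univ_nonempty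
    (fun 𝒞 => Tcol C i 𝒞 + Trow R 𝒞 i')

lemma hEdge_le (i i' : Fin m) (𝒞 : Fin k → Fin n) :
    hEdge k R C i i' ≤ Tcol C i 𝒞 + Trow R 𝒞 i' :=
  Finset.inf'_le _ (mem_univ 𝒞)

lemma hEdge_nonneg (i i' : Fin m) : 0 ≤ hEdge k R C i i' := by
  apply Finset.le_inf'
  intro 𝒞 _
  have := Tcol_nonneg k C i 𝒞
  have := Trow_nonneg k R 𝒞 i'
  linarith

lemma hEdge_exists (i i' : Fin m) : ∃ 𝒞 : Fin k → Fin n,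
    hEdge k R C i i' = Tcol C i 𝒞 + Trow R 𝒞 i' := by
  obtain ⟨𝒞, _, h⟩ := Finset.exists_mem_eq_inf'
    (univ_nonempty : (univ : Finset (Fin k → Fin n)).Nonempty)
    (fun 𝒞 => Tcol C i 𝒞 + Trow R 𝒞 i')
  exact ⟨𝒞, h⟩

/-- cost of a walk in the row graph. -/
noncomputable def wcost (u : ℕ → Fin m) (p : ℕ) : ℝ :=
  ∑ s ∈ Finset.range p, hEdge k R C (u s) (u (s+1))

lemma wcost_nonneg (u : ℕ → Fin m) (p : ℕ) : 0 ≤ wcost k R C u p :=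
  Finset.sum_nonneg fun s _ => hEdge_nonneg k R C _ _

lemma shorten (p : ℕ) : ∀ (u : ℕ → Fin m), ∃ q ≤ m - 1, ∃ v : ℕ → Fin m,
    v 0 = u 0 ∧ v q = u p ∧ wcost k R C v q ≤ wcost k R C u p := by
  induction p using Nat.strong_induction_on with
  | _ p ih =>
    intro u
    by_cases hp : p ≤ m - 1
    · exact ⟨p, hp, u, rfl, rfl, le_rfl⟩
    · push_neg at hp
      have hm1 : 1 ≤ m := NeZero.pos m
      have hmp : m ≤ p := by omega
      obtain ⟨x, y, hxy, hfxy⟩ := Fintype.exists_ne_map_eq_of_card_lt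
        (fun s : Fin (m+1) => u s) (by simp)
      obtain ⟨a, b, hab, hbm, huab⟩ : ∃ a b : ℕ, a < b ∧ b ≤ m ∧ u a = u b := by
        rcases lt_or_gt_of_ne hxy with h | h
        · exact ⟨x, y, h, by omega, hfxy⟩
        · exact ⟨y, x, h, by omega, hfxy.symm⟩
      set Δ := b - a with hΔ
      set v : ℕ → Fin m := fun s => if s < a then u s else u (s + Δ) with hv
      have vlo : ∀ s ≤ a, v s = u s := by
        intro s hs
        by_cases h : s < a
        · simp [hv, h]
        · have hsa : s = a := by omega
          subst hsa
          simp only [hv, lt_irrefl, if_false]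
          have e : s + Δ = b := by omega
          rw [e, ← huab]
      have vhi : ∀ s, a ≤ s → v s = u (s + Δ) := by
        intro s hs
        have h : ¬ s < a := by omega
        simp [hv, h]
      set q' := p - Δ with hq'
      have haq' : a ≤ q' := by omega
      have hq'p : q' < p := by omega
      have hkey : wcost k R C v q' ≤ wcost k R C u p := by
        have e1 : wcost k R C v q' =
            (∑ s ∈ Ico 0 a, hEdge k R C (u s) (u (s+1)))
            + ∑ s ∈ Ico a q', hEdge k R C (u (s+Δ)) (u (s+1+Δ)) := by
          rw [wcost, range_eq_Ico, ← Finset.sum_Ico_consecutive _ (Nat.zero_le a) haq']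
          congr 1
          · apply Finset.sum_congr rfl
            intro s hs
            simp only [mem_Ico] at hs
            rw [vlo s (by omega), vlo (s+1) (by omega)]
          · apply Finset.sum_congr rfl
            intro s hs
            simp only [mem_Ico] at hs
            rw [vhi s (by omega), vhi (s+1) (by omega)]
        have e2 : ∑ s ∈ Ico a q', hEdge k R C (u (s+Δ)) (u (s+1+Δ))
            = ∑ s ∈ Ico b p, hEdge k R C (u s) (u (s+1)) := by
          rw [Finset.sum_Ico_eq_sum_range, Finset.sum_Ico_eq_sum_range]
          have e : p - b = q' - a := by omega
          rw [e]
          apply Finset.sum_congr rfl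
          intro s _
          have e3 : a + s + Δ = b + s := by omega
          have e4 : a + s + 1 + Δ = b + s + 1 := by omega
          rw [e3, e4]
        have e5 : wcost k R C u p =
            (∑ s ∈ Ico 0 a, hEdge k R C (u s) (u (s+1)))
            + ((∑ s ∈ Ico a b, hEdge k R C (u s) (u (s+1)))
              + ∑ s ∈ Ico b p, hEdge k R C (u s) (u (s+1))) := by
          rw [wcost, range_eq_Ico,
            ← Finset.sum_Ico_consecutive _ (Nat.zero_le a) (by omega : a ≤ p),
            ← Finset.sum_Ico_consecutive _ (le_of_lt hab) (by omega : b ≤ p)]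
        have e6 : 0 ≤ ∑ s ∈ Ico a b, hEdge k R C (u s) (u (s+1)) :=
          Finset.sum_nonneg fun s _ => hEdge_nonneg k R C _ _
        rw [e1, e2, e5]
        linarith
      obtain ⟨q, hq, w, hw0, hwq, hle⟩ := ih q' hq'p v
      refine ⟨q, hq, w, ?_, ?_, le_trans hle hkey⟩
      · rw [hw0, vlo 0 (Nat.zero_le a)]
      · rw [hwq, vhi q' haq']
        have e : q' + Δ = p := by omega
        rw [e]

/-- walks of length ≤ m-1, encoded by m vertices. -/
noncomputable def toWalk {m : ℕ} [NeZero m] (v : Fin m → Fin m) (s : ℕ) : Fin m :=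
  v ⟨min s (m-1), by have := NeZero.pos m; omega⟩

lemma exists_short_walk (r1 i : Fin m) : ∃ q ≤ m - 1, ∃ v : ℕ → Fin m,
    v 0 = r1 ∧ v q = i := by
  by_cases h : i = r1
  · exact ⟨0, Nat.zero_le _, fun _ => r1, rfl, h.symm⟩
  · have hm : 2 ≤ m := by
      by_contra hm
      have hm1 : m = 1 := by have := NeZero.pos m; omega
      subst hm1
      exact h (Subsingleton.elim i r1)
    exact ⟨1, by omega, fun s => if s = 0 then r1 else i, by simp, by simp⟩

noncomputable def walkSet (r1 i : Fin m) : Finset ℝ :=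
  Finset.image (fun z : Fin m × (Fin m → Fin m) => wcost k R C (toWalk z.2) z.1)
    (Finset.univ.filter (fun z : Fin m × (Fin m → Fin m) =>
      toWalk z.2 0 = r1 ∧ toWalk z.2 (z.1 : ℕ) = i))

lemma toWalk_eq (v : ℕ → Fin m) : ∀ s ≤ m - 1, toWalk (fun t : Fin m => v t) s = v s := by
  intro s hs
  have h1 : min s (m-1) = s := min_eq_left hs
  simp only [toWalk, h1]

lemma walkSet_mem (r1 i : Fin m) (q : ℕ) (hq : q ≤ m - 1) (v : ℕ → Fin m)
    (hv0 : v 0 = r1) (hvq : v q = i) : wcost k R C v q ∈ walkSet k R C r1 i := by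
  have hm := NeZero.pos m
  unfold walkSet
  refine Finset.mem_image.2 ⟨(⟨q, by omega⟩, fun t : Fin m => v t), ?_, ?_⟩
  · simp only [Finset.mem_filter, Finset.mem_univ, true_and]
    constructor
    · rw [toWalk_eq v 0 (Nat.zero_le _)]; exact hv0
    · rw [toWalk_eq v q hq]; exact hvq
  · simp only [wcost]
    apply Finset.sum_congr rfl
    intro s hs
    simp only [mem_range] at hs
    rw [toWalk_eq v s (by omega), toWalk_eq v (s+1) (by omega)]

lemma walkSet_nonempty (r1 i : Fin m) : (walkSet k R C r1 i).Nonempty := by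
  obtain ⟨q, hq, v, hv0, hvq⟩ := exists_short_walk (m := m) r1 i
  exact ⟨_, walkSet_mem k R C r1 i q hq v hv0 hvq⟩

/-- shortest-walk distance from `r1`. -/
noncomputable def Dfun (r1 i : Fin m) : ℝ :=
  Finset.min' (walkSet k R C r1 i) (walkSet_nonempty k R C r1 i)

lemma Dfun_attained (r1 i : Fin m) : ∃ q ≤ m - 1, ∃ v : ℕ → Fin m,
    v 0 = r1 ∧ v q = i ∧ Dfun k R C r1 i = wcost k R C v q := by
  have h := Finset.min'_mem (walkSet k R C r1 i) (walkSet_nonempty k R C r1 i)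
  unfold walkSet at h
  rw [Finset.mem_image] at h
  obtain ⟨z, hz, hcost⟩ := h
  simp only [Finset.mem_filter, Finset.mem_univ, true_and] at hz
  exact ⟨(z.1 : ℕ), by omega, toWalk z.2, hz.1, hz.2, hcost.symm⟩

lemma Dfun_le (r1 i : Fin m) (q : ℕ) (hq : q ≤ m - 1) (v : ℕ → Fin m)
    (hv0 : v 0 = r1) (hvq : v q = i) : Dfun k R C r1 i ≤ wcost k R C v q :=
  Finset.min'_le _ _ (walkSet_mem k R C r1 i q hq v hv0 hvq)

lemma Dfun_le_all (r1 i : Fin m) (p : ℕ) (u : ℕ → Fin m)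
    (hu0 : u 0 = r1) (hup : u p = i) : Dfun k R C r1 i ≤ wcost k R C u p := by
  obtain ⟨q, hq, v, hv0, hvq, hle⟩ := shorten k R C p u
  exact le_trans (Dfun_le k R C r1 i q hq v (hv0.trans hu0) (hvq.trans hup)) hle

lemma Dfun_nonneg (r1 i : Fin m) : 0 ≤ Dfun k R C r1 i := by
  obtain ⟨q, _, v, _, _, hD⟩ := Dfun_attained k R C r1 i
  rw [hD]; exact wcost_nonneg k R C v q

lemma Dfun_self (r1 : Fin m) : Dfun k R C r1 r1 = 0 := by
  have h1 : Dfun k R C r1 r1 ≤ wcost k R C (fun _ => r1) 0 :=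
    Dfun_le k R C r1 r1 0 (Nat.zero_le _) _ rfl rfl
  have h2 : wcost k R C (fun _ : ℕ => r1) 0 = 0 := by simp [wcost]
  have h3 := Dfun_nonneg k R C r1 r1
  linarith [h1.trans_eq h2]

lemma Dfun_triangle (r1 i i' : Fin m) :
    Dfun k R C r1 i' ≤ Dfun k R C r1 i + hEdge k R C i i' := by
  obtain ⟨q, hq, v, hv0, hvq, hD⟩ := Dfun_attained k R C r1 i
  set u : ℕ → Fin m := fun s => if s ≤ q then v s else i' with hu
  have hu0 : u 0 = r1 := by simp only [hu, Nat.zero_le, if_true]; exact hv0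
  have huq1 : u (q+1) = i' := by simp [hu]
  have hle := Dfun_le_all k R C r1 i' (q+1) u hu0 huq1
  have hw : wcost k R C u (q+1) = wcost k R C v q + hEdge k R C i i' := by
    rw [wcost, Finset.sum_range_succ]
    congr 1
    · apply Finset.sum_congr rfl
      intro s hs
      simp only [mem_range] at hs
      have e1 : u s = v s := by simp only [hu]; rw [if_pos (by omega)]
      have e2 : u (s+1) = v (s+1) := by simp only [hu]; rw [if_pos (by omega)]
      rw [e1, e2]
    · have e1 : u q = i := by simp only [hu, le_refl, if_true]; exact hvq
      rw [e1, huq1]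
  rw [hD]
  rw [hw] at hle
  exact hle


/-- potential on column profiles. -/
noncomputable def gfun (r1 : Fin m) (𝒞 : Fin k → Fin n) : ℝ :=
  univ.sup' univ_nonempty (fun i => Dfun k R C r1 i - Trow R 𝒞 i)

lemma gfun_ge (r1 i : Fin m) (𝒞 : Fin k → Fin n) :
    Dfun k R C r1 i - Trow R 𝒞 i ≤ gfun k R C r1 𝒞 := by
  unfold gfun
  exact Finset.le_sup' (fun i => Dfun k R C r1 i - Trow R 𝒞 i) (mem_univ i)

lemma gfun_le (r1 r : Fin m) (𝒞' : Fin k → Fin n) :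
    gfun k R C r1 𝒞' ≤ Dfun k R C r1 r + Tcol C r 𝒞' := by
  apply Finset.sup'_le
  intro i _
  have h1 := Dfun_triangle k R C r1 r i
  have h2 := hEdge_le k R C r i 𝒞'
  linarith

lemma step_ge (r1 r r' : Fin m) (𝒞 𝒞' : Fin k → Fin n) :
    (Dfun k R C r1 r' + gfun k R C r1 𝒞') - (Dfun k R C r1 r + gfun k R C r1 𝒞)
      ≤ Tcol C r 𝒞' + Trow R 𝒞 r' := by
  have h1 := gfun_ge k R C r1 r' 𝒞
  have h2 := gfun_le k R C r1 r 𝒞'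
  linarith

lemma pathCost_lower (r1 rstar : Fin m) (C1 Cstar : Fin k → Fin n)
    (hinit1 : Trow R C1 r1 = 0) (hinit2 : Tcol C r1 C1 = 0)
    (htarget1 : Trow R Cstar rstar = 0)
    (Q : ℕ → Fin m × (Fin k → Fin n)) (L : ℕ)
    (hQ0 : Q 0 = (r1, C1)) (hQL : Q L = (rstar, Cstar)) :
    2 * Dfun k R C r1 rstar ≤ pathCost R C Q L := by
  set Φ : (Fin m × (Fin k → Fin n)) → ℝ :=
    fun z => Dfun k R C r1 z.1 + gfun k R C r1 z.2 with hΦ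
  have hstep : ∀ t, Φ (Q (t+1)) - Φ (Q t) ≤
      Tcol C (Q t).1 (Q (t+1)).2 + Trow R (Q t).2 (Q (t+1)).1 := by
    intro t
    exact step_ge k R C r1 (Q t).1 (Q (t+1)).1 (Q t).2 (Q (t+1)).2
  have htel : Φ (Q L) - Φ (Q 0) ≤ pathCost R C Q L := by
    rw [pathCost, ← Finset.sum_range_sub (fun t => Φ (Q t)) L]
    exact Finset.sum_le_sum fun t _ => hstep t
  have hgC1 : gfun k R C r1 C1 = 0 := by
    apply le_antisymm
    · apply Finset.sup'_le
      intro i _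
      have h1 := Dfun_triangle k R C r1 r1 i
      have h2 := hEdge_le k R C r1 i C1
      have h3 := Dfun_self k R C r1
      simp only [sub_nonpos]
      linarith
    · have h := gfun_ge k R C r1 r1 C1
      rw [Dfun_self k R C r1, hinit1] at h
      simpa using h
  have hgCstar : Dfun k R C r1 rstar ≤ gfun k R C r1 Cstar := by
    have h := gfun_ge k R C r1 rstar Cstar
    rw [htarget1] at h
    simpa using h
  have hΦ0 : Φ (Q 0) = 0 := by
    rw [hQ0, hΦ]
    simp only
    rw [Dfun_self k R C r1, hgC1]
    ring
  have hΦL : 2 * Dfun k R C r1 rstar ≤ Φ (Q L) := by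
    rw [hQL, hΦ]
    simp only
    linarith
  linarith

lemma sum_range_two_mul (f : ℕ → ℝ) (q : ℕ) :
    ∑ t ∈ range (2*q), f t = ∑ s ∈ range q, (f (2*s) + f (2*s+1)) := by
  induction q with
  | zero => simp
  | succ q ih =>
    have e : 2 * (q+1) = (2*q + 1) + 1 := by ring
    rw [e, Finset.sum_range_succ, Finset.sum_range_succ, Finset.sum_range_succ, ih]
    ring


lemma exists_cheap_path (r1 rstar : Fin m) (C1 Cstar : Fin k → Fin n)
    (hinit1 : Trow R C1 r1 = 0) (htarget1 : Trow R Cstar rstar = 0)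
    (htarget2 : Tcol C rstar Cstar = 0) :
    ∃ L ≤ 2*m-1, ∃ P : ℕ → Fin m × (Fin k → Fin n),
      P 0 = (r1, C1) ∧ P L = (rstar, Cstar) ∧
      pathCost R C P L = 2 * Dfun k R C r1 rstar := by
  have hm1 : 1 ≤ m := NeZero.pos m
  obtain ⟨q, hq, v, hv0, hvq, hD⟩ := Dfun_attained k R C r1 rstar
  set pick : ℕ → (Fin k → Fin n) :=
    fun s => Classical.choose (hEdge_exists k R C (v s) (v (s+1))) with hpickdef
  have hpick : ∀ s, hEdge k R C (v s) (v (s+1))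
      = Tcol C (v s) (pick s) + Trow R (pick s) (v (s+1)) :=
    fun s => Classical.choose_spec (hEdge_exists k R C (v s) (v (s+1)))
  set P : ℕ → Fin m × (Fin k → Fin n) := fun t =>
    if t = 0 then (r1, C1) else if 2*q+1 ≤ t then (rstar, Cstar)
    else (v (t/2), pick ((t-1)/2)) with hP
  have hP0 : P 0 = (r1, C1) := by simp [hP]
  have hPend : P (2*q+1) = (rstar, Cstar) := by
    simp only [hP]
    rw [if_neg (by omega), if_pos (by omega)]
  refine ⟨2*q+1, by omega, P, hP0, hPend, ?_⟩
  rw [hD]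
  set c : ℕ → ℝ := fun t =>
    Tcol C (P t).1 (P (t+1)).2 + Trow R (P t).2 (P (t+1)).1 with hc
  have hpc : pathCost R C P (2*q+1) = ∑ t ∈ range (2*q+1), c t := rfl
  by_cases hq0 : q = 0
  · subst hq0
    have hrr : r1 = rstar := by rw [← hv0, hvq]
    rw [hpc, Finset.sum_range_one]
    have h1 : P 1 = (rstar, Cstar) := by
      simp only [hP]
      rw [if_neg (by omega), if_pos (by omega)]
    simp only [hc, hP0, h1, wcost, Finset.range_zero, Finset.sum_empty]
    rw [hrr] at hinit1
    rw [hrr, htarget2, hinit1]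
    ring
  · -- q ≥ 1
    have hq1 : 1 ≤ q := by omega
    set A : ℕ → ℝ := fun s => Tcol C (v s) (pick s) with hA
    set B : ℕ → ℝ := fun s => Trow R (pick s) (v (s+1)) with hB
    have hPo : ∀ s, s < q → P (2*s+1) = (v s, pick s) := by
      intro s hs
      simp only [hP]
      rw [if_neg (by omega), if_neg (by omega)]
      have e1 : (2*s+1)/2 = s := by omega
      have e2 : (2*s+1-1)/2 = s := by omega
      rw [e1, e2]
    have hPe : ∀ s, 1 ≤ s → s ≤ q → P (2*s) = (v s, pick (s-1)) := by
      intro s h1 h2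
      simp only [hP]
      rw [if_neg (by omega), if_neg (by omega)]
      have e1 : (2*s)/2 = s := by omega
      have e2 : (2*s-1)/2 = s-1 := by omega
      rw [e1, e2]
    have ceval_odd : ∀ s, s < q → c (2*s+1) = A s + B s := by
      intro s hs
      have h1 : P (2*s+1) = (v s, pick s) := hPo s hs
      have h2 : P (2*s+1+1) = (v (s+1), pick s) := by
        have e : 2*s+1+1 = 2*(s+1) := by ring
        rw [e, hPe (s+1) (by omega) (by omega)]
      simp only [hc, h1, h2]
      rfl
    have ceval_even : ∀ s, s < q → c (2*s) = A s + (if s = 0 then 0 else B (s-1)) := by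
      intro s hs
      have h1 : P (2*s+1) = (v s, pick s) := hPo s hs
      by_cases h0 : s = 0
      · subst h0
        have h1' : P (0+1) = (v 0, pick 0) := by
          have e : 2*0+1 = 0+1 := by norm_num
          rw [← e]; exact h1
        have e0 : (2:ℕ)*0 = 0 := by norm_num
        rw [e0]
        simp only [hc, hA, hP0, h1', if_pos rfl]
        rw [hv0, hinit1]
        simp
      · have h2 : P (2*s) = (v s, pick (s-1)) := hPe s (by omega) (by omega)
        have h3 : 2*s+1 = 2*s+1 := rfl
        simp only [hc, h2, h1, if_neg h0]
        have e : s - 1 + 1 = s := by omega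
        simp only [hA, hB, e]
    have ceval_last : c (2*q) = B (q-1) := by
      have h2 : P (2*q) = (v q, pick (q-1)) := hPe q hq1 le_rfl
      have h3 : P (2*q+1) = (rstar, Cstar) := hPend
      simp only [hc, h2, h3, hvq]
      rw [htarget2]
      have e : q - 1 + 1 = q := by omega
      simp only [hB, e, hvq]
      ring
    have hw : wcost k R C v q = ∑ s ∈ range q, (A s + B s) :=
      Finset.sum_congr rfl fun s _ => hpick s
    obtain ⟨q₀, rfl⟩ : ∃ q₀, q = q₀ + 1 := ⟨q-1, by omega⟩
    have e1 : ∑ t ∈ range (2*(q₀+1)+1), c t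
        = ∑ s ∈ range (q₀+1), (c (2*s) + c (2*s+1)) + c (2*(q₀+1)) := by
      rw [Finset.sum_range_succ, sum_range_two_mul]
    have e2 : ∑ s ∈ range (q₀+1), (c (2*s) + c (2*s+1))
        = ∑ s ∈ range (q₀+1), ((2*A s + B s) + (if s = 0 then 0 else B (s-1))) := by
      apply Finset.sum_congr rfl
      intro s hs
      simp only [mem_range] at hs
      rw [ceval_even s hs, ceval_odd s hs]
      ring
    have e3 : ∑ s ∈ range (q₀+1), (if s = 0 then (0:ℝ) else B (s-1))
        = ∑ s ∈ range q₀, B s := by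
      rw [Finset.sum_range_succ']
      simp
    rw [hpc, e1, e2, Finset.sum_add_distrib, e3, ceval_last, hw]
    have e4 : (q₀+1) - 1 = q₀ := by omega
    rw [e4]
    have e6 : ∑ s ∈ range (q₀+1), B s = ∑ s ∈ range q₀, B s + B q₀ :=
      Finset.sum_range_succ B q₀
    have e7 : ∑ s ∈ range (q₀+1), (2 * A s + B s)
        = 2 * ∑ s ∈ range (q₀+1), A s + ∑ s ∈ range (q₀+1), B s := by
      rw [Finset.sum_add_distrib, Finset.mul_sum]
    have e8 : ∑ s ∈ range (q₀+1), (A s + B s)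
        = ∑ s ∈ range (q₀+1), A s + ∑ s ∈ range (q₀+1), B s := Finset.sum_add_distrib
    rw [e7, e8, e6]
    ring

end Aux

/-- For any initial equilibrium `(r(1),𝒞(1))` and target equilibrium `(r*,𝒞*)`, there exists a
transformation path between them whose total cost is the minimum over all transformation paths
between these two profiles and whose length (number of steps) is at most `2m − 1`. -/
theorem exists_optimal_transformation_path_of_length_le
    (m n k : ℕ) [NeZero m] [NeZero n]
    (R C : Fin m → Fin n → ℝ)
    (r1 rstar : Fin m) (C1 Cstar : Fin k → Fin n)
    (hinit : IsEquilibrium R C r1 C1)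
    (htarget : IsEquilibrium R C rstar Cstar) :
    ∃ (L : ℕ) (P : ℕ → Fin m × (Fin k → Fin n)),
      P 0 = (r1, C1) ∧ P L = (rstar, Cstar) ∧ L ≤ 2 * m - 1 ∧
      IsLeast (transCosts R C (r1, C1) (rstar, Cstar)) (pathCost R C P L) := by
  obtain ⟨L, hL, P, hP0, hPL, hcost⟩ :=
    exists_cheap_path k R C r1 rstar C1 Cstar hinit.1 htarget.1 htarget.2
  refine ⟨L, P, hP0, hPL, hL, ?_, ?_⟩
  · exact ⟨L, P, hP0, hPL, rfl⟩
  · rintro x ⟨L', Q, hQ0, hQL, rfl⟩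
    rw [hcost]
    exact pathCost_lower k R C r1 rstar C1 Cstar hinit.1 hinit.2 htarget.1 Q L' hQ0 hQL
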